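/- arXiv:2604.22252 — 4 statements merged into one kernel-verified Lean document; each statement's English description precedes it below -/
import Mathlib

section
/- If the Seidel spectrum of a graph G on n vertices is {σ_1,...,σ_n}, then the Seidel spectrum of D_m(G) is {mσ_i + (m-1) : i = 1,...,n} together with the eigenvalue -1 with multiplicity mn - n. -/
open Matrix Kronecker BigOperators Finset

/-- The all-ones matrix. -/
noncomputable def allOnes (k : Type*) [Fintype k] : Matrix k k ℝ :=
  Matrix.of fun _ _ => 1

/-- The Seidel matrix formed from an adjacency matrix `M`: `S(M) = J - I - 2M`. -/
noncomputable def seidelOf {k : Type*} [Fintype k] [DecidableEq k]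
    (M : Matrix k k ℝ) : Matrix k k ℝ :=
  allOnes k - 1 - 2 • M

/-- The (complex) multiset of eigenvalues of a real matrix: roots of its
characteristic polynomial over `ℂ`. -/
noncomputable def specC {k : Type*} [Fintype k] [DecidableEq k]
    (M : Matrix k k ℝ) : Multiset ℂ :=
  ((M.map (Complex.ofReal)).charpoly).roots

/-- The energy of a real matrix: the sum of absolute values of its eigenvalues. -/
noncomputable def energy {k : Type*} [Fintype k] [DecidableEq k]
    (M : Matrix k k ℝ) : ℝ :=
  ((specC M).map (fun z : ℂ => ‖z‖)).sum

section Aux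

open Polynomial

variable {k : Type*} [Fintype k] [DecidableEq k]

/-- Characteristic polynomial is invariant under conjugation. -/
lemma charpoly_conj_aux {R : Type*} [CommRing R] (P Q M : Matrix k k R)
    (h : P * Q = 1) : (P * M * Q).charpoly = M.charpoly := by
  have hcm : charmatrix (P * M * Q) = P.map C * charmatrix M * Q.map C := by
    rw [charmatrix, charmatrix, Matrix.mul_sub, Matrix.sub_mul]
    congr 1
    · have hsc : P.map C * Matrix.scalar k (X : R[X]) = Matrix.scalar k X * P.map C :=
        (Matrix.scalar_commute (X : R[X]) (fun r => Commute.all _ _) (P.map C)).eq.symm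
      rw [hsc, Matrix.mul_assoc, ← Matrix.map_mul, h,
        Matrix.map_one _ (map_zero C) (map_one C), Matrix.mul_one]
    · simp only [RingHom.mapMatrix_apply]
      rw [← Matrix.map_mul, ← Matrix.map_mul]
  rw [Matrix.charpoly, Matrix.charpoly, hcm, det_mul, det_mul]
  have h1 : (P.map C).det * (Q.map C).det = 1 := by
    rw [← det_mul, ← Matrix.map_mul, h, Matrix.map_one _ (map_zero C) (map_one C), det_one]
  calc (P.map C).det * (charmatrix M).det * (Q.map C).det
      = (charmatrix M).det * ((P.map C).det * (Q.map C).det) := by ring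
    _ = (charmatrix M).det := by rw [h1, mul_one]

/-- Characteristic polynomial of a block diagonal matrix. -/
lemma charpoly_blockDiagonal_aux {R : Type*} [CommRing R] {o : Type*} [Fintype o]
    [DecidableEq o] (g : o → Matrix k k R) :
    (blockDiagonal g).charpoly = ∏ i, (g i).charpoly := by
  have hcm : charmatrix (blockDiagonal g) = blockDiagonal fun i => charmatrix (g i) := by
    ext ⟨j, i⟩ ⟨l, i'⟩
    by_cases h : i = i'
    · subst h
      by_cases hjl : j = l <;>
        simp [charmatrix_apply, blockDiagonal_apply, Matrix.diagonal_apply, Prod.ext_iff, hjl]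
    · simp [charmatrix_apply, blockDiagonal_apply, Matrix.diagonal_apply, Prod.ext_iff, h]
  rw [Matrix.charpoly, hcm, det_blockDiagonal]
  rfl

/-- Roots of the charpoly of `a • N + b • 1` over `ℂ`. -/
lemma roots_charpoly_affine (N : Matrix k k ℂ) (a b : ℂ) (ha : a ≠ 0) :
    ((a • N + b • (1 : Matrix k k ℂ)).charpoly).roots =
      N.charpoly.roots.map fun x => a * x + b := by
  set u : ℂ[X] := C a⁻¹ * (X - C b) with hu
  have hCau : C a * u = X - C b := by
    rw [hu, ← mul_assoc, ← C_mul, mul_inv_cancel₀ ha, C_1, one_mul]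
  set φ : ℂ[X] →+* ℂ[X] := eval₂RingHom C u with hφ
  -- the matrix identity
  have hmat : charmatrix (a • N + b • (1 : Matrix k k ℂ)) =
      C a • ((charmatrix N).map φ) := by
    ext i j
    by_cases h : i = j
    · subst h
      simp only [charmatrix_apply, Matrix.diagonal_apply_eq, Matrix.add_apply,
        Matrix.smul_apply, Matrix.one_apply_eq, smul_eq_mul, mul_one, Matrix.map_apply,
        hφ, coe_eval₂RingHom, eval₂_sub, eval₂_X, eval₂_C]
      rw [mul_sub, hCau, C_add, C_mul]
      ring
    · simp only [charmatrix_apply, Matrix.diagonal_apply_ne _ h, Matrix.add_apply,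
        Matrix.smul_apply, Matrix.one_apply_ne h, smul_eq_mul, mul_zero, add_zero,
        Matrix.map_apply, hφ, coe_eval₂RingHom, eval₂_sub, eval₂_X, eval₂_C, eval₂_zero]
      rw [C_mul]
      ring
  have hq : (a • N + b • (1 : Matrix k k ℂ)).charpoly =
      C a ^ Fintype.card k * φ N.charpoly := by
    rw [Matrix.charpoly, hmat, det_smul, Matrix.charpoly, RingHom.map_det]
    rfl
  -- factor `p` into linear factors
  have hmonic := N.charpoly_monic
  have hsplit : N.charpoly = (N.charpoly.roots.map fun r => X - C r).prod :=
    (IsAlgClosed.splits _).eq_prod_roots_of_monic hmonic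
  have hfac : ∀ r : ℂ, φ (X - C r) = C a⁻¹ * (X - C (a * r + b)) := by
    intro r
    have : a⁻¹ * (a * r + b) = a⁻¹ * b + r := by field_simp; ring
    simp only [hφ, coe_eval₂RingHom, eval₂_sub, eval₂_X, eval₂_C, hu]
    rw [mul_sub, mul_sub, ← C_mul, ← C_mul, this, C_add]
    ring
  have hcomp : φ N.charpoly =
      C (a⁻¹ ^ N.charpoly.roots.card) *
        (N.charpoly.roots.map fun r => X - C (a * r + b)).prod := by
    conv_lhs => rw [hsplit]
    rw [map_multiset_prod, Multiset.map_map]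
    have : (N.charpoly.roots.map fun r => φ (X - C r)) =
        N.charpoly.roots.map fun r => C a⁻¹ * (X - C (a * r + b)) := by
      exact Multiset.map_congr rfl fun r _ => hfac r
    rw [Function.comp_def, this, Multiset.prod_map_mul, Multiset.map_const',
      Multiset.prod_replicate, C_pow]
  have hconst : (a ^ Fintype.card k * a⁻¹ ^ N.charpoly.roots.card) ≠ 0 :=
    mul_ne_zero (pow_ne_zero _ ha) (pow_ne_zero _ (inv_ne_zero ha))
  rw [hq, hcomp, ← mul_assoc, ← C_pow, ← C_mul, roots_C_mul _ hconst]
  have := roots_multiset_prod_X_sub_C (N.charpoly.roots.map fun r => a * r + b)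
  rw [Multiset.map_map] at this
  exact this

end Aux

theorem seidel_spectrum_Dm {m n : ℕ} (hm : 1 ≤ m) (G : SimpleGraph (Fin n))
    [DecidableRel G.Adj] :
    specC (seidelOf (allOnes (Fin m) ⊗ₖ G.adjMatrix ℝ)) =
      (specC (seidelOf (G.adjMatrix ℝ))).map (fun σ => (m : ℂ) * σ + ((m : ℂ) - 1)) +
        Multiset.replicate (m * n - n) (-1 : ℂ) := by
  classical
  simp only [specC]
  obtain ⟨m', rfl⟩ : ∃ m', m = m' + 1 := ⟨m - 1, by omega⟩
  set A := G.adjMatrix ℝ with hA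
  set a : ℂ := ((m' + 1 : ℕ) : ℂ) with haa
  have ha0 : a ≠ 0 := by
    rw [haa]; exact Nat.cast_ne_zero.mpr (Nat.succ_ne_zero m')
  set Sc : Matrix (Fin n) (Fin n) ℂ := (seidelOf A).map Complex.ofReal with hSc
  set Cc : Matrix (Fin n) (Fin n) ℂ := Sc + 1 with hCc
  set Jc : Matrix (Fin (m' + 1)) (Fin (m' + 1)) ℂ := Matrix.of fun _ _ => 1 with hJc
  set Qm : Matrix (Fin (m' + 1)) (Fin (m' + 1)) ℂ :=
    Matrix.of fun i j => if j = 0 then 1 else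
      (if i = j then 1 else 0) - (if i = 0 then 1 else 0) with hQm
  set Rm : Matrix (Fin (m' + 1)) (Fin (m' + 1)) ℂ :=
    Matrix.of fun i j => if i = 0 then a⁻¹ else
      (if i = j then 1 else 0) - a⁻¹ with hRm
  -- column sums of Qm
  have hcol : ∀ kk, (∑ j, Qm j kk) = if kk = 0 then a else 0 := by
    intro kk
    by_cases hk : kk = 0
    · subst hk
      rw [if_pos rfl, Finset.sum_congr rfl fun j _ => show Qm j 0 = 1 by simp [hQm],
        Finset.sum_const, Finset.card_univ, Fintype.card_fin, nsmul_eq_mul, mul_one, ← haa]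
    · rw [if_neg hk, Finset.sum_congr rfl fun j _ =>
        show Qm j kk = (if j = kk then (1:ℂ) else 0) - (if j = 0 then 1 else 0) by
          simp [hQm, hk],
        Finset.sum_sub_distrib]
      simp
  -- row sums of Rm
  have hrow : ∀ i, (∑ j, Rm i j) = if i = 0 then 1 else 0 := by
    intro i
    by_cases hi : i = 0
    · subst hi
      rw [if_pos rfl, Finset.sum_congr rfl fun j _ => show Rm 0 j = a⁻¹ by simp [hRm],
        Finset.sum_const, Finset.card_univ, Fintype.card_fin, nsmul_eq_mul, ← haa,
        mul_inv_cancel₀ ha0]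
    · rw [if_neg hi, Finset.sum_congr rfl fun j _ =>
        show Rm i j = (if i = j then (1:ℂ) else 0) - a⁻¹ by simp [hRm, hi],
        Finset.sum_sub_distrib, Finset.sum_const, Finset.card_univ, Fintype.card_fin,
        nsmul_eq_mul, ← haa, mul_inv_cancel₀ ha0]
      simp
  -- Rm * Qm = 1
  have hRQ : Rm * Qm = 1 := by
    ext i kk
    rw [Matrix.mul_apply, Matrix.one_apply]
    by_cases hi : i = 0
    · subst hi
      have : ∀ j, Rm 0 j * Qm j kk = a⁻¹ * Qm j kk := by
        intro j; simp [hRm]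
      rw [Finset.sum_congr rfl fun j _ => this j, ← Finset.mul_sum, hcol]
      by_cases hk : kk = 0
      · simp [hk, inv_mul_cancel₀ ha0]
      · simp [hk, Ne.symm hk]
    · have : ∀ j, Rm i j * Qm j kk =
          (if i = j then 1 else 0) * Qm j kk - a⁻¹ * Qm j kk := by
        intro j; simp [hRm, hi, sub_mul]
      rw [Finset.sum_congr rfl fun j _ => this j, Finset.sum_sub_distrib, ← Finset.mul_sum,
        hcol]
      have h1 : (∑ j, (if i = j then (1:ℂ) else 0) * Qm j kk) = Qm i kk := by
        simp
      rw [h1]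
      by_cases hk : kk = 0
      · simp [hk, hQm, hi, inv_mul_cancel₀ ha0]
      · simp only [if_neg hk, mul_zero, sub_zero, hQm, Matrix.of_apply, if_neg hk,
          Matrix.one_apply]
        by_cases hik : i = kk <;> simp [hik, hi, hk]
  have hQR : Qm * Rm = 1 := mul_eq_one_comm.mp hRQ
  -- Rm * Jc * Qm = E
  set Em : Matrix (Fin (m' + 1)) (Fin (m' + 1)) ℂ :=
    Matrix.of fun i kk => if i = 0 ∧ kk = 0 then a else 0 with hEm
  have hRJQ : Rm * Jc * Qm = Em := by
    have h1 : Rm * Jc = Matrix.of fun i _ => if i = 0 then (1:ℂ) else 0 := by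
      ext i j
      rw [Matrix.mul_apply]
      simpa [hJc] using hrow i
    rw [h1]
    ext i kk
    rw [Matrix.mul_apply]
    by_cases hi : i = 0
    · subst hi
      simp only [Matrix.of_apply, eq_self_iff_true, if_true, one_mul]
      rw [hcol]
      simp [hEm]
    · simp [hEm, hi]
  -- the big matrix over ℂ
  have hbig : (seidelOf (allOnes (Fin (m' + 1)) ⊗ₖ A)).map Complex.ofReal
      = Jc ⊗ₖ Cc - 1 := by
    ext x y
    obtain ⟨i, j⟩ := x
    obtain ⟨kk, l⟩ := y
    simp only [Matrix.map_apply, seidelOf, allOnes, Matrix.sub_apply, Matrix.smul_apply,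
      Matrix.one_apply, Matrix.of_apply, kroneckerMap_apply, hCc, hSc, hJc, Matrix.add_apply,
      Prod.mk.injEq]
    push_cast
    by_cases h1 : i = kk <;> by_cases h2 : j = l <;> simp [h1, h2, Prod.ext_iff] <;> ring
  have hPQ1' : (Rm ⊗ₖ (1 : Matrix (Fin n) (Fin n) ℂ)) * (Qm ⊗ₖ (1 : Matrix (Fin n) (Fin n) ℂ))
      = 1 := by
    rw [← Matrix.mul_kronecker_mul, hRQ, Matrix.mul_one, Matrix.one_kronecker_one]
  -- conjugation
  have hconj : (Rm ⊗ₖ (1 : Matrix (Fin n) (Fin n) ℂ)) * (Jc ⊗ₖ Cc - 1) *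
      (Qm ⊗ₖ (1 : Matrix (Fin n) (Fin n) ℂ)) = Em ⊗ₖ Cc - 1 := by
    have e1 : (Rm ⊗ₖ (1 : Matrix (Fin n) (Fin n) ℂ)) * (Jc ⊗ₖ Cc) *
        (Qm ⊗ₖ (1 : Matrix (Fin n) (Fin n) ℂ)) = Em ⊗ₖ Cc := by
      rw [← Matrix.mul_kronecker_mul, ← Matrix.mul_kronecker_mul]
      simp only [Matrix.one_mul, Matrix.mul_one]
      rw [hRJQ]
    rw [Matrix.mul_sub, Matrix.mul_one, Matrix.sub_mul, e1, hPQ1']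
  -- block diagonal form
  set g : Fin (m' + 1) → Matrix (Fin n) (Fin n) ℂ :=
    fun i => if i = 0 then a • Cc - 1 else -1 with hg
  have hblock : Em ⊗ₖ Cc - 1 =
      Matrix.reindex (Equiv.prodComm (Fin n) (Fin (m' + 1))) (Equiv.prodComm (Fin n) (Fin (m' + 1)))
        (blockDiagonal g) := by
    ext x y
    obtain ⟨i, j⟩ := x
    obtain ⟨kk, l⟩ := y
    simp only [Matrix.sub_apply, kroneckerMap_apply, Matrix.one_apply, Matrix.reindex_apply,
      Matrix.submatrix_apply, Equiv.prodComm_symm, Equiv.prodComm_apply, Prod.swap_prod_mk,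
      hEm, Matrix.of_apply]
    by_cases h1 : i = kk
    · subst h1
      by_cases hi : i = 0
      · subst hi
        simp [blockDiagonal_apply, hg, Prod.ext_iff, Matrix.sub_apply, Matrix.smul_apply,
          Matrix.one_apply]
      · simp [blockDiagonal_apply, hg, hi, Prod.ext_iff, Matrix.one_apply]
    · rw [blockDiagonal_apply_ne _ _ _ h1]
      have hnot : ¬(i = 0 ∧ kk = 0) := fun h => h1 (h.1.trans h.2.symm)
      simp [h1, hnot, Prod.ext_iff]
  -- now compute the charpoly roots
  have hPQ1 : (Rm ⊗ₖ (1 : Matrix (Fin n) (Fin n) ℂ)) * (Qm ⊗ₖ (1 : Matrix (Fin n) (Fin n) ℂ))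
      = 1 := by
    rw [← Matrix.mul_kronecker_mul, hRQ, Matrix.mul_one, Matrix.one_kronecker_one]
  have hcp : ((seidelOf (allOnes (Fin (m' + 1)) ⊗ₖ A)).map Complex.ofReal).charpoly
      = ∏ i, (g i).charpoly := by
    rw [hbig, ← charpoly_conj_aux (Rm ⊗ₖ (1 : Matrix (Fin n) (Fin n) ℂ))
      (Qm ⊗ₖ (1 : Matrix (Fin n) (Fin n) ℂ)) (Jc ⊗ₖ Cc - 1) hPQ1, hconj, hblock,
      Matrix.charpoly_reindex, charpoly_blockDiagonal_aux]
  have hprod : ∏ i, (g i).charpoly =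
      (g 0).charpoly * ((-1 : Matrix (Fin n) (Fin n) ℂ).charpoly) ^ m' := by
    rw [Fin.prod_univ_succ]
    congr 1
    have hsucc : ∀ i : Fin m', g i.succ = -1 := fun i => by
      simp [hg, Fin.succ_ne_zero]
    rw [Finset.prod_congr rfl fun i _ => by rw [hsucc i]]
    rw [Finset.prod_const, Finset.card_univ, Fintype.card_fin]
  have hneg : (-1 : Matrix (Fin n) (Fin n) ℂ).charpoly.roots = Multiset.replicate n (-1) := by
    have hch : Matrix.charmatrix (-1 : Matrix (Fin n) (Fin n) ℂ)
        = Matrix.diagonal fun _ => (Polynomial.X + 1 : Polynomial ℂ) := by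
      ext i j
      by_cases h : i = j <;>
        simp [Matrix.charmatrix_apply, Matrix.diagonal, h, Matrix.one_apply]
    rw [Matrix.charpoly, hch, Matrix.det_diagonal, Finset.prod_const, Finset.card_univ,
      Fintype.card_fin]
    rw [show (Polynomial.X + 1 : Polynomial ℂ) = Polynomial.X - Polynomial.C (-1) by simp,
      Polynomial.roots_pow, Polynomial.roots_X_sub_C, Multiset.nsmul_singleton]
  have hg0 : g 0 = a • Sc + (a - 1) • (1 : Matrix (Fin n) (Fin n) ℂ) := by
    simp only [hg, if_pos rfl, hCc, smul_add, sub_smul, one_smul]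
    abel
  have hne : (g 0).charpoly * ((-1 : Matrix (Fin n) (Fin n) ℂ).charpoly) ^ m' ≠ 0 :=
    mul_ne_zero (g 0).charpoly_monic.ne_zero
      (pow_ne_zero _ (-1 : Matrix (Fin n) (Fin n) ℂ).charpoly_monic.ne_zero)
  rw [hcp, hprod, Polynomial.roots_mul hne, Polynomial.roots_pow, hneg,
    Multiset.nsmul_replicate, hg0, roots_charpoly_affine _ _ _ ha0]
  congr 1
  rw [Nat.succ_mul, Nat.add_sub_cancel]
end

section
/- If the Seidel spectrum of a graph G on n vertices is {σ_1,...,σ_n}, then the Seidel spectrum of D_m^*(G) is {mσ_i - (m-1) : i = 1,...,n} together with the eigenvalue 1 with multiplicity mn - n. -/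
open Matrix Kronecker BigOperators Finset
open Polynomial

lemma my_vecMulVec_mul {k : Type*} [Fintype k] {R : Type*} [CommRing R] (a b c d : k → R) :
    vecMulVec a b * vecMulVec c d = (b ⬝ᵥ c) • vecMulVec a d := by
  refine Matrix.ext fun i j => ?_
  simp only [Matrix.mul_apply, vecMulVec_apply, Matrix.smul_apply, dotProduct, smul_eq_mul,
    Finset.sum_mul]
  exact Finset.sum_congr rfl fun x _ => by ring

lemma my_charmatrix_blockDiagonal {o k : Type*} [Fintype o] [DecidableEq o] [Fintype k]
    [DecidableEq k] {R : Type*} [CommRing R] (f : o → Matrix k k R) :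
    charmatrix (blockDiagonal f) = blockDiagonal fun i => charmatrix (f i) := by
  refine Matrix.ext fun ⟨a, i⟩ ⟨b, j⟩ => ?_
  rcases eq_or_ne i j with rfl | h
  · simp [charmatrix_apply, blockDiagonal_apply, diagonal_apply, Prod.ext_iff]
  · simp [charmatrix_apply, blockDiagonal_apply, diagonal_apply, Prod.ext_iff, h, Ne.symm h]

lemma my_charpoly_blockDiagonal {o k : Type*} [Fintype o] [DecidableEq o] [Fintype k]
    [DecidableEq k] {R : Type*} [CommRing R] (f : o → Matrix k k R) :
    (blockDiagonal f).charpoly = ∏ i, (f i).charpoly := by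
  rw [Matrix.charpoly, my_charmatrix_blockDiagonal, det_blockDiagonal]
  rfl

lemma my_charpoly_conj {k : Type*} [Fintype k] [DecidableEq k] {R : Type*} [CommRing R]
    (P Q M : Matrix k k R) (h : P * Q = 1) :
    (P * M * Q).charpoly = M.charpoly := by
  have hc : (P.map C) * (Q.map C) = 1 := by
    rw [← Matrix.map_mul, h, Matrix.map_one _ (map_zero _) (map_one _)]
  have hch : charmatrix (P * M * Q) = (P.map C) * charmatrix M * (Q.map C) := by
    unfold charmatrix
    rw [Matrix.mul_sub, Matrix.sub_mul]
    congr 1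
    · rw [← scalar_commute _ (fun r => Commute.all _ r) _, Matrix.mul_assoc, hc, Matrix.mul_one]
    · simp [RingHom.mapMatrix_apply, ← Matrix.map_mul]
  rw [Matrix.charpoly, hch, det_mul, det_mul]
  rw [show (P.map C).det * (charmatrix M).det * (Q.map C).det
      = (charmatrix M).det * ((P.map C) * (Q.map C)).det by rw [det_mul]; ring, hc, det_one,
    mul_one, Matrix.charpoly]

lemma my_affine_factor (a b c : ℂ) (ha : a ≠ 0) :
    C a * (C a⁻¹ * (X - C b) - C c) = X - C (a * c + b) := by
  rw [mul_sub, ← mul_assoc, ← C_mul, mul_inv_cancel₀ ha, C_1, one_mul, C_add, C_mul]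
  ring

lemma my_roots_charpoly_affine {k : Type*} [Fintype k] [DecidableEq k]
    (N : Matrix k k ℂ) (a b : ℂ) (ha : a ≠ 0) :
    (a • N + b • (1 : Matrix k k ℂ)).charpoly.roots
      = N.charpoly.roots.map (fun σ => a * σ + b) := by
  set s := N.charpoly.roots with hs
  have hsplits : Splits N.charpoly := IsAlgClosed.splits _
  have hcard : Multiset.card s = Fintype.card k := by
    rw [hs, ← Matrix.charpoly_natDegree_eq_dim N]
    exact splits_iff_card_roots.mp hsplits
  have hprod : N.charpoly = (s.map fun σ => X - C σ).prod :=
    hsplits.eq_prod_roots_of_monic N.charpoly_monic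
  set g : ℂ[X] →ₐ[ℂ] ℂ[X] := aeval (C a⁻¹ * (X - C b)) with hg
  have key : (a • N + b • (1 : Matrix k k ℂ)).charpoly
      = (s.map fun σ => X - C (a * σ + b)).prod := by
    have hch : charmatrix (a • N + b • (1 : Matrix k k ℂ))
        = C a • ((charmatrix N).map g) := by
      refine Matrix.ext fun i j => ?_
      rcases eq_or_ne i j with rfl | h
      · simp only [charmatrix_apply, Matrix.map_apply, Matrix.smul_apply,
          Matrix.add_apply, Matrix.one_apply_eq, diagonal_apply_eq, smul_eq_mul,
          hg, map_sub, aeval_X, aeval_C, Polynomial.algebraMap_eq]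
        rw [my_affine_factor a b (N i i) ha]
        rw [mul_one]
      · simp only [charmatrix_apply, Matrix.map_apply, Matrix.smul_apply,
          Matrix.add_apply, Matrix.one_apply_ne h, diagonal_apply_ne _ h, smul_eq_mul,
          hg, map_sub, aeval_X, aeval_C, Polynomial.algebraMap_eq, zero_sub, mul_zero, add_zero]
        rw [map_neg, aeval_C, Polynomial.algebraMap_eq, C_mul]
        ring
    rw [Matrix.charpoly, hch, det_smul]
    have hdet : ((charmatrix N).map g).det = g N.charpoly := by
      rw [Matrix.charpoly, AlgHom.map_det]
      rfl
    rw [hdet, hprod, map_multiset_prod, Multiset.map_map, ← hcard]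
    rw [← Multiset.prod_replicate, ← Multiset.map_const', ← Multiset.prod_map_mul]
    congr 1
    apply Multiset.map_congr rfl
    intro σ _
    simp only [Function.comp_apply, hg, map_sub, aeval_X, aeval_C, Polynomial.algebraMap_eq]
    exact my_affine_factor a b σ ha
  rw [key, show (Multiset.map (fun σ => X - C (a * σ + b)) s)
      = Multiset.map (fun c => X - C c) (s.map (fun σ => a * σ + b)) by
        rw [Multiset.map_map]; rfl,
    roots_multiset_prod_X_sub_C]

lemma my_charpoly_one {k : Type*} [Fintype k] [DecidableEq k] :
    (1 : Matrix k k ℂ).charpoly = (X - C 1) ^ (Fintype.card k) := by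
  have : charmatrix (1 : Matrix k k ℂ) = diagonal fun _ => (X - C 1 : ℂ[X]) := by
    refine Matrix.ext fun i j => ?_
    rcases eq_or_ne i j with rfl | h
    · simp [charmatrix_apply]
    · simp [charmatrix_apply, h, Matrix.one_apply_ne h]
  rw [Matrix.charpoly, this, det_diagonal, Finset.prod_const, Finset.card_univ]

theorem seidel_spectrum_Dmstar {m n : ℕ} (hm : 1 ≤ m) (G : SimpleGraph (Fin n))
    [DecidableRel G.Adj] :
    specC (seidelOf (allOnes (Fin m) ⊗ₖ (G.adjMatrix ℝ + 1) - 1)) =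
      (specC (seidelOf (G.adjMatrix ℝ))).map (fun σ => (m : ℂ) * σ - ((m : ℂ) - 1)) +
        Multiset.replicate (m * n - n) (1 : ℂ) := by
  classical
  haveI : NeZero m := ⟨by omega⟩
  have hmC : (m : ℂ) ≠ 0 := Nat.cast_ne_zero.mpr (NeZero.ne m)
  set A := G.adjMatrix ℝ with hA
  set Sc : Matrix (Fin n) (Fin n) ℂ := (seidelOf A).map Complex.ofReal with hSc
  set B : Matrix (Fin n) (Fin n) ℂ := Sc - 1 with hB
  set u : Fin m → ℂ := fun _ => 1 with hu
  set e : Fin m → ℂ := fun i => if i = 0 then 1 else 0 with he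
  have huu : u ⬝ᵥ u = (m : ℂ) := by simp [hu, dotProduct]
  have hue : u ⬝ᵥ e = 1 := by simp [hu, he, dotProduct]
  have heu : e ⬝ᵥ u = 1 := by simp [hu, he, dotProduct]
  have hee : e ⬝ᵥ e = 1 := by simp [he, dotProduct]
  -- Step 1: the mapped big Seidel matrix
  have hmap : (seidelOf (allOnes (Fin m) ⊗ₖ (A + 1) - 1)).map Complex.ofReal
      = (vecMulVec u u) ⊗ₖ B + 1 := by
    refine Matrix.ext fun ⟨i, k⟩ ⟨j, l⟩ => ?_
    simp only [Matrix.map_apply, seidelOf, allOnes, hB, hSc, hu, Matrix.sub_apply,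
      Matrix.add_apply, Matrix.smul_apply, Matrix.one_apply, kroneckerMap_apply,
      vecMulVec_apply, Matrix.of_apply, Prod.mk.injEq, smul_eq_mul, one_mul]
    by_cases hij : i = j <;> by_cases hkl : k = l <;>
      simp [hij, hkl] <;> push_cast <;> ring
  -- Step 2: similarity to a block-diagonal matrix
  set Cm : Matrix (Fin m) (Fin m) ℂ := 1 + vecMulVec u e - vecMulVec e u with hCm
  set Cm' : Matrix (Fin m) (Fin m) ℂ :=
    1 + (2 / (m : ℂ)) • vecMulVec e u - (m : ℂ)⁻¹ • vecMulVec u u - vecMulVec e e with hCm'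
  have hCC : Cm' * Cm = 1 := by
    simp only [hCm, hCm', mul_add, add_mul, mul_sub, sub_mul, one_mul, mul_one,
      smul_mul_assoc, mul_smul_comm, my_vecMulVec_mul, huu, hue, heu, hee, one_smul, smul_smul]
    match_scalars <;> field_simp <;> ring
  have hJC : Cm' * vecMulVec u u * Cm = (m : ℂ) • vecMulVec e e := by
    simp only [hCm, hCm', mul_add, add_mul, mul_sub, sub_mul, one_mul, mul_one,
      smul_mul_assoc, mul_smul_comm, my_vecMulVec_mul, huu, hue, heu, hee, one_smul, smul_smul]
    match_scalars <;> field_simp <;> ring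
  set P : Matrix (Fin m × Fin n) (Fin m × Fin n) ℂ := Cm' ⊗ₖ (1 : Matrix (Fin n) (Fin n) ℂ)
    with hP
  set Q : Matrix (Fin m × Fin n) (Fin m × Fin n) ℂ := Cm ⊗ₖ (1 : Matrix (Fin n) (Fin n) ℂ)
    with hQ
  have hPQ : P * Q = 1 := by
    rw [hP, hQ, ← Matrix.mul_kronecker_mul, hCC, Matrix.mul_one, Matrix.one_kronecker_one]
  have hconj : P * ((vecMulVec u u) ⊗ₖ B + 1) * Q = ((m : ℂ) • vecMulVec e e) ⊗ₖ B + 1 := by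
    rw [Matrix.mul_add, Matrix.add_mul, Matrix.mul_one, hPQ, hP, hQ,
      ← Matrix.mul_kronecker_mul, ← Matrix.mul_kronecker_mul, hJC, Matrix.one_mul,
      Matrix.mul_one]
  -- Step 3: identify with a block diagonal matrix
  set g : Fin m → Matrix (Fin n) (Fin n) ℂ :=
    fun i => if i = 0 then (m : ℂ) • B + 1 else 1 with hgdef
  have hblock : ((m : ℂ) • vecMulVec e e) ⊗ₖ B + 1
      = (reindex (Equiv.prodComm (Fin n) (Fin m)) (Equiv.prodComm (Fin n) (Fin m))
          (blockDiagonal g)) := by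
    refine Matrix.ext fun ⟨i, k⟩ ⟨j, l⟩ => ?_
    simp only [Matrix.add_apply, kroneckerMap_apply, Matrix.smul_apply, vecMulVec_apply, he,
      Matrix.one_apply, reindex_apply, submatrix_apply, Equiv.prodComm_symm, Equiv.prodComm_apply,
      Prod.swap_prod_mk, blockDiagonal_apply, hgdef, Prod.mk.injEq, smul_eq_mul]
    by_cases hij : i = j <;> by_cases hkl : k = l <;> by_cases hi0 : i = 0 <;>
      by_cases hj0 : j = 0 <;>
      simp_all [Matrix.one_apply, Matrix.add_apply, Matrix.smul_apply] <;> ring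
  -- Step 4: compute the characteristic polynomial
  have hcp : ((seidelOf (allOnes (Fin m) ⊗ₖ (A + 1) - 1)).map Complex.ofReal).charpoly
      = ((m : ℂ) • B + 1).charpoly * ((X - C 1) ^ n) ^ (m - 1) := by
    rw [hmap, ← my_charpoly_conj P Q _ hPQ, hconj, hblock, Matrix.charpoly_reindex,
      my_charpoly_blockDiagonal, ← Finset.mul_prod_erase Finset.univ _ (Finset.mem_univ 0)]
    have hcongr : ∀ x ∈ Finset.univ.erase (0 : Fin m),
        (if x = 0 then (m : ℂ) • B + 1 else (1 : Matrix (Fin n) (Fin n) ℂ)).charpoly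
          = (X - C 1) ^ n := fun x hx => by
      rw [if_neg (Finset.mem_erase.mp hx).1]
      rw [my_charpoly_one, Fintype.card_fin]
    rw [Finset.prod_congr rfl hcongr, Finset.prod_const,
      Finset.card_erase_of_mem (Finset.mem_univ 0), Finset.card_univ, Fintype.card_fin, hgdef]
    simp
  -- Step 5: take roots
  have h1 : ((m : ℂ) • B + 1) = (m : ℂ) • Sc + (1 - (m : ℂ)) • 1 := by
    rw [hB, smul_sub]
    module
  have hroots1 : ((m : ℂ) • B + 1).charpoly.roots
      = Sc.charpoly.roots.map (fun σ => (m : ℂ) * σ - ((m : ℂ) - 1)) := by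
    rw [h1, my_roots_charpoly_affine Sc (m : ℂ) (1 - (m : ℂ)) hmC]
    exact Multiset.map_congr rfl fun σ _ => by ring
  have hroots2 : (((X - C 1) ^ n) ^ (m - 1) : ℂ[X]).roots
      = Multiset.replicate (m * n - n) (1 : ℂ) := by
    rw [← pow_mul, roots_pow, roots_X_sub_C]
    rw [show n * (m - 1) = m * n - n by
      cases m with
      | zero => omega
      | succ m' => rw [Nat.succ_sub_one, Nat.succ_mul, Nat.add_sub_cancel, mul_comm]]
    rw [Multiset.nsmul_singleton]
  have hne : (((m : ℂ) • B + 1).charpoly * ((X - C 1) ^ n) ^ (m - 1)) ≠ 0 :=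
    (((m : ℂ) • B + 1).charpoly_monic.mul (((monic_X_sub_C (1 : ℂ)).pow n).pow (m - 1))).ne_zero
  rw [specC, hcp, roots_mul hne, hroots1, hroots2, specC]
end

section
/- If G has Seidel spectrum {σ_1,...,σ_n}, then D_m^*(D_m(G)) has Seidel spectrum {m²σ_i + (m-1)² : i = 1,...,n} together with the eigenvalue 1-2m with multiplicity mn - n and the eigenvalue 1 with multiplicity m²n - mn. -/
open Matrix Kronecker BigOperators Finset

section Auxiliary

open Polynomial

variable {k : Type*} [Fintype k] [DecidableEq k]

lemma my_charpoly_conj_s13 (V W M : Matrix k k ℂ) (h1 : V * W = 1) :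
    (W * M * V).charpoly = M.charpoly := by
  have h2 : W * V = 1 := mul_eq_one_comm.mp h1
  have hsc : ∀ N : Matrix k k ℂ, Matrix.charmatrix N
      = (X : ℂ[X]) • (1 : Matrix k k ℂ[X]) - N.map C := by
    intro N; ext i j
    by_cases h : i = j <;>
      simp [Matrix.charmatrix_apply, Matrix.diagonal_apply, h, Matrix.one_apply]
  have key : charmatrix (W * M * V) = (W.map C) * charmatrix M * (V.map C) := by
    rw [hsc, hsc]
    rw [Matrix.mul_sub, Matrix.sub_mul, mul_smul_comm, smul_mul_assoc, Matrix.mul_one,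
      ← Matrix.map_mul, ← Matrix.map_mul, ← Matrix.map_mul, h2]
    simp
  unfold Matrix.charpoly
  rw [key, Matrix.det_mul, Matrix.det_mul, mul_comm, ← mul_assoc, ← Matrix.det_mul,
    ← Matrix.map_mul, h1]
  simp

lemma my_charpoly_diagonal (v : k → ℂ) :
    (Matrix.diagonal v).charpoly = ∏ i, (X - C (v i)) := by
  have : charmatrix (Matrix.diagonal v) = Matrix.diagonal fun i => (X : ℂ[X]) - C (v i) := by
    ext i j
    by_cases h : i = j <;>
      simp [Matrix.charmatrix_apply, Matrix.diagonal_apply, h]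
  rw [Matrix.charpoly, this, Matrix.det_diagonal]

lemma my_roots_charpoly_diagonal (v : k → ℂ) :
    (Matrix.diagonal v).charpoly.roots = Finset.univ.val.map v := by
  rw [my_charpoly_diagonal, Finset.prod_eq_multiset_prod, ← Polynomial.roots_multiset_prod_X_sub_C
    (Finset.univ.val.map v)]
  rw [Multiset.map_map]
  rfl

set_option linter.unnecessarySimpa false in
lemma my_roots_hermitian {A : Matrix k k ℂ} (hA : A.IsHermitian) :
    A.charpoly.roots = Finset.univ.val.map (fun i => (hA.eigenvalues i : ℂ)) := by
  conv_lhs => rw [hA.spectral_theorem, Unitary.conjStarAlgAut_apply]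
  rw [my_charpoly_conj_s13 (star hA.eigenvectorUnitary : Matrix k k ℂ) _ _
    (by simpa using (Unitary.star_mul_self_of_mem hA.eigenvectorUnitary.2))]
  exact my_roots_charpoly_diagonal _

lemma my_charpoly_allOnes {m : ℕ} (hm : 1 ≤ m) :
    ((allOnes (Fin m)).map Complex.ofReal).charpoly
      = X ^ (m - 1) * (X - C (m : ℂ)) := by
  apply Polynomial.eq_of_infinite_eval_eq
  apply Set.Infinite.mono (s := {(0:ℂ)}ᶜ)
  swap
  · exact Set.Finite.infinite_compl (Set.finite_singleton 0)
  intro z hz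
  have hz0 : z ≠ 0 := hz
  have heval : ∀ M : Matrix (Fin m) (Fin m) ℂ,
      (M.charpoly).eval z = (z • (1 : Matrix (Fin m) (Fin m) ℂ) - M).det := by
    intro M
    rw [Matrix.charpoly, ← Polynomial.coe_evalRingHom, RingHom.map_det]
    congr 1
    ext i j
    by_cases h : i = j <;>
      simp [Matrix.charmatrix_apply, Matrix.diagonal_apply, h, Matrix.one_apply]
  simp only [Set.mem_setOf_eq, heval]
  have hcr : ∀ i j : Fin m,
      (Matrix.replicateCol Unit (fun _ : Fin m => -z⁻¹) * Matrix.replicateRow Unit (fun _ : Fin m => (1:ℂ))) i j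
        = -z⁻¹ := by
    intro i j; simp [Matrix.mul_apply]
  have hzz : z * z⁻¹ = 1 := mul_inv_cancel₀ hz0
  have hfac : z • (1 : Matrix (Fin m) (Fin m) ℂ) - (allOnes (Fin m)).map Complex.ofReal
      = z • ((1 : Matrix (Fin m) (Fin m) ℂ)
          + Matrix.replicateCol Unit (fun _ : Fin m => -z⁻¹) * Matrix.replicateRow Unit (fun _ : Fin m => (1:ℂ))) := by
    ext i j
    by_cases h : i = j <;>
      · simp [allOnes, Matrix.one_apply, h, hcr]
        first | linear_combination hzz | linear_combination -hzz
  rw [hfac, Matrix.det_smul, Matrix.det_one_add_replicateCol_mul_replicateRow]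
  have hdot : (fun (_ : Fin m) => (1:ℂ)) ⬝ᵥ (fun _ : Fin m => -z⁻¹) = -(m * z⁻¹) := by
    simp [dotProduct, Finset.card_univ, mul_comm]
  rw [hdot, Fintype.card_fin]
  have hm' : m = (m - 1) + 1 := (Nat.succ_pred_eq_of_pos hm).symm
  rw [show z ^ m = z ^ (m-1) * z from by conv_lhs => rw [hm', pow_succ]]
  simp only [eval_mul, eval_pow, eval_X, eval_sub, eval_C]
  rw [show z ^ (m-1) * z * (1 + -((m:ℂ) * z⁻¹)) = z ^ (m-1) * (z - (m:ℂ) * (z * z⁻¹)) from by ring,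
    hzz]
  ring

lemma my_roots_XpowXsubC {m : ℕ} :
    ((X:ℂ[X]) ^ (m-1) * (X - C (m : ℂ))).roots
      = Multiset.replicate (m-1) 0 + {(m:ℂ)} := by
  rw [Polynomial.roots_mul (by
    apply mul_ne_zero (pow_ne_zero _ Polynomial.X_ne_zero) (Polynomial.X_sub_C_ne_zero _))]
  rw [Polynomial.roots_pow, Polynomial.roots_X, Polynomial.roots_X_sub_C]
  rw [Multiset.nsmul_singleton]

lemma my_extract {m : ℕ} (e : Fin m → ℂ)
    (h : (Finset.univ.val.map e) = Multiset.replicate (m-1) 0 + {(m:ℂ)}) :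
    ∃ i₀ : Fin m, e i₀ = m ∧ ∀ i, i ≠ i₀ → e i = 0 := by
  have hmem : (m:ℂ) ∈ Finset.univ.val.map e := by
    rw [h]; simp
  obtain ⟨i₀, -, hi₀⟩ := Multiset.mem_map.mp hmem
  refine ⟨i₀, hi₀, ?_⟩
  have hcons : (Finset.univ.val : Multiset (Fin m)) = i₀ ::ₘ Finset.univ.val.erase i₀ :=
    (Multiset.cons_erase (by simp)).symm
  rw [hcons, Multiset.map_cons, hi₀,
    show Multiset.replicate (m-1) (0:ℂ) + {(m:ℂ)} = (m:ℂ) ::ₘ Multiset.replicate (m-1) 0 from by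
      rw [add_comm, Multiset.singleton_add],
    Multiset.cons_inj_right] at h
  intro i hi
  have : e i ∈ (Finset.univ.val.erase i₀).map e := by
    apply Multiset.mem_map_of_mem
    exact Multiset.mem_erase_of_ne hi |>.mpr (by simp)
  rw [h] at this
  exact Multiset.eq_of_mem_replicate this

lemma my_map_univ_prod {α β γ : Type*} [Fintype α] [Fintype β] (f : α × β → γ) :
    (Finset.univ : Finset (α × β)).val.map f
      = (Finset.univ : Finset α).val.bind
          (fun a => (Finset.univ : Finset β).val.map (fun b => f (a, b))) := by
  rw [← Finset.univ_product_univ, Finset.product_val]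
  show Multiset.map f (Multiset.product _ _) = _
  rw [Multiset.product, Multiset.map_bind]
  simp [Multiset.map_map, Function.comp]

lemma my_conjTranspose_kronecker {k l : Type*} [Fintype k] [Fintype l]
    (A : Matrix k k ℂ) (B : Matrix l l ℂ) :
    (A ⊗ₖ B)ᴴ = Aᴴ ⊗ₖ Bᴴ := by
  ext ⟨i,j⟩ ⟨i',j'⟩
  simp [Matrix.conjTranspose_apply, Matrix.kroneckerMap_apply, mul_comm]

lemma my_conj_step {m' n' : ℕ}
    (J U1 : Matrix (Fin m') (Fin m') ℂ) (S U2 : Matrix (Fin n') (Fin n') ℂ)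
    (e : Fin m' → ℂ) (d : Fin n' → ℂ)
    (hU1 : star U1 * U1 = 1) (hU2 : star U2 * U2 = 1)
    (hD1 : star U1 * J * U1 = Matrix.diagonal e)
    (hD2 : star U2 * S * U2 = Matrix.diagonal d) :
    star (U1 ⊗ₖ (U1 ⊗ₖ U2)) *
        (J ⊗ₖ (J ⊗ₖ (S + 1))
          - (2:ℂ) • (J ⊗ₖ (1 : Matrix (Fin m' × Fin n') (Fin m' × Fin n') ℂ)) + 1) *
        (U1 ⊗ₖ (U1 ⊗ₖ U2))
      = Matrix.diagonal (fun x : Fin m' × Fin m' × Fin n' =>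
          e x.1 * (e x.2.1 * (d x.2.2 + 1)) - 2 * e x.1 + 1) := by
  have hstar : star (U1 ⊗ₖ (U1 ⊗ₖ U2)) = star U1 ⊗ₖ (star U1 ⊗ₖ star U2) := by
    simp [Matrix.star_eq_conjTranspose, my_conjTranspose_kronecker]
  simp only [hstar, Matrix.mul_add, Matrix.add_mul, Matrix.mul_sub, Matrix.sub_mul,
    Matrix.mul_smul, Matrix.smul_mul, Matrix.mul_one, Matrix.one_mul,
    ← Matrix.mul_kronecker_mul]
  rw [hD1, hD2, hU1, hU2]
  ext ⟨i, j, k⟩ ⟨i', j', k'⟩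
  simp only [Matrix.sub_apply, Matrix.add_apply, Matrix.smul_apply, Matrix.kroneckerMap_apply,
    Matrix.one_apply, Matrix.diagonal_apply, Prod.mk.injEq, smul_eq_mul]
  split_ifs
  all_goals (try (exfalso; tauto))
  all_goals ring

lemma my_bind_erase {α β : Type*} [Fintype α] [DecidableEq α] (i₀ : α)
    (g : α → Multiset β) (Y : Multiset β) (hg : ∀ i, i ≠ i₀ → g i = Y) :
    ((Finset.univ : Finset α).val.erase i₀).bind g
      = (Fintype.card α - 1) • Y := by
  rw [Multiset.bind_congr (f := g) (g := fun _ => Y)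
    (fun i hi => hg i (Finset.univ.nodup.mem_erase_iff.mp hi).1)]
  rw [show ((Finset.univ : Finset α).val.erase i₀).bind (fun _ => Y)
      = ((Finset.univ.val.erase i₀).map (fun _ => Y)).sum from rfl]
  rw [Multiset.map_const', Multiset.sum_replicate]
  congr 1
  rw [Multiset.card_erase_of_mem (by simp)]
  simp [Finset.card_univ]

lemma my_multiset_final {m n : ℕ} (e : Fin m → ℂ) (d : Fin n → ℂ)
    (i₀ : Fin m) (he : e i₀ = m) (h0 : ∀ i, i ≠ i₀ → e i = 0) :
    (Finset.univ.val.map (fun x : Fin m × Fin m × Fin n =>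
        e x.1 * (e x.2.1 * (d x.2.2 + 1)) - 2 * e x.1 + 1))
      = (Finset.univ.val.map d).map (fun σ => (m:ℂ)^2 * σ + ((m:ℂ) - 1)^2)
        + Multiset.replicate (m*n - n) ((1:ℂ) - 2*m)
        + Multiset.replicate (m^2*n - m*n) 1 := by
  have hcons : (Finset.univ.val : Multiset (Fin m)) = i₀ ::ₘ Finset.univ.val.erase i₀ :=
    (Multiset.cons_erase (by simp)).symm
  rw [my_map_univ_prod, hcons, Multiset.cons_bind]
  rw [my_bind_erase i₀ _ (Multiset.replicate (m*n) (1:ℂ)) ?_]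
  swap
  · intro i hi
    rw [show (fun b : Fin m × Fin n => e i * (e b.1 * (d b.2 + 1)) - 2 * e i + 1)
        = fun _ => (1:ℂ) from by funext b; rw [h0 i hi]; ring]
    rw [Multiset.map_const']
    congr 1
    simp [Finset.card_univ]
  rw [my_map_univ_prod (fun b : Fin m × Fin n => e i₀ * (e b.1 * (d b.2 + 1)) - 2 * e i₀ + 1),
    hcons, Multiset.cons_bind]
  rw [my_bind_erase i₀ _ (Multiset.replicate n ((1:ℂ) - 2*m)) ?_]
  swap
  · intro j hj
    rw [show (fun k : Fin n => e i₀ * (e j * (d k + 1)) - 2 * e i₀ + 1)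
        = fun _ => ((1:ℂ) - 2*m) from by funext k; rw [h0 j hj, he]; ring]
    rw [Multiset.map_const']
    congr 1
    simp
  rw [show (fun k : Fin n => e i₀ * (e i₀ * (d k + 1)) - 2 * e i₀ + 1)
      = fun k => (m:ℂ)^2 * d k + ((m:ℂ) - 1)^2 from by funext k; rw [he]; ring]
  rw [Multiset.map_map]
  simp only [Fintype.card_fin, Fintype.card_prod, Multiset.nsmul_replicate]
  rw [show (m-1) * n = m*n - n from by rw [Nat.sub_mul, one_mul],
    show (m-1) * (m*n) = m^2*n - m*n from by rw [Nat.sub_mul, one_mul]; ring_nf]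
  simp [Function.comp]

end Auxiliary

theorem seidel_spectrum_DmstarDm {m n : ℕ} (hm : 1 ≤ m) (G : SimpleGraph (Fin n))
    [DecidableRel G.Adj] :
    specC (seidelOf (allOnes (Fin m) ⊗ₖ ((allOnes (Fin m) ⊗ₖ G.adjMatrix ℝ) + 1) - 1)) =
      (specC (seidelOf (G.adjMatrix ℝ))).map
          (fun σ => (m : ℂ) ^ 2 * σ + ((m : ℂ) - 1) ^ 2) +
        Multiset.replicate (m * n - n) ((1 : ℂ) - 2 * m) +
        Multiset.replicate (m ^ 2 * n - m * n) (1 : ℂ) := by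
  classical
  set Sc : Matrix (Fin n) (Fin n) ℂ := (seidelOf (G.adjMatrix ℝ)).map Complex.ofReal with hScdef
  set Jc : Matrix (Fin m) (Fin m) ℂ := (allOnes (Fin m)).map Complex.ofReal with hJcdef
  have hJH : Jc.IsHermitian := by
    ext i j
    simp [hJcdef, allOnes, Matrix.conjTranspose_apply, Matrix.map_apply]
  have hSsymm : ∀ i j, seidelOf (G.adjMatrix ℝ) j i = seidelOf (G.adjMatrix ℝ) i j := by
    intro i j
    simp only [seidelOf, allOnes, Matrix.sub_apply, Matrix.smul_apply, Matrix.one_apply,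
      Matrix.of_apply, two_smul, Matrix.add_apply, SimpleGraph.adjMatrix_apply]
    simp only [show G.Adj j i ↔ G.Adj i j from G.adj_comm j i]
    by_cases h : i = j <;> simp [h, eq_comm]
  have hSH : Sc.IsHermitian := by
    ext i j
    simp only [hScdef, Matrix.conjTranspose_apply, Matrix.map_apply]
    rw [Complex.star_def, Complex.conj_ofReal, hSsymm]
  set U1 : Matrix (Fin m) (Fin m) ℂ := (hJH.eigenvectorUnitary : Matrix (Fin m) (Fin m) ℂ)
    with hU1def
  set U2 : Matrix (Fin n) (Fin n) ℂ := (hSH.eigenvectorUnitary : Matrix (Fin n) (Fin n) ℂ)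
    with hU2def
  set e : Fin m → ℂ := fun i => ((hJH.eigenvalues i : ℝ) : ℂ) with hedef
  set d : Fin n → ℂ := fun i => ((hSH.eigenvalues i : ℝ) : ℂ) with hddef
  have hU1s : star U1 * U1 = 1 := Matrix.mem_unitaryGroup_iff'.mp hJH.eigenvectorUnitary.2
  have hU2s : star U2 * U2 = 1 := Matrix.mem_unitaryGroup_iff'.mp hSH.eigenvectorUnitary.2
  have h1Us : U1 * star U1 = 1 := Matrix.mem_unitaryGroup_iff.mp hJH.eigenvectorUnitary.2
  have h2Us : U2 * star U2 = 1 := Matrix.mem_unitaryGroup_iff.mp hSH.eigenvectorUnitary.2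
  have hD1 : star U1 * Jc * U1 = Matrix.diagonal e :=
    by have := hJH.conjStarAlgAut_star_eigenvectorUnitary; rwa [Unitary.conjStarAlgAut_star_apply] at this
  have hD2 : star U2 * Sc * U2 = Matrix.diagonal d :=
    by have := hSH.conjStarAlgAut_star_eigenvectorUnitary; rwa [Unitary.conjStarAlgAut_star_apply] at this
  -- complexification of the big Seidel matrix
  have hBig : (seidelOf (allOnes (Fin m) ⊗ₖ ((allOnes (Fin m) ⊗ₖ G.adjMatrix ℝ) + 1) - 1)).map
        Complex.ofReal
      = Jc ⊗ₖ (Jc ⊗ₖ (Sc + 1))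
        - (2:ℂ) • (Jc ⊗ₖ (1 : Matrix (Fin m × Fin n) (Fin m × Fin n) ℂ)) + 1 := by
    ext ⟨i, j, k⟩ ⟨i', j', k'⟩
    simp only [hScdef, hJcdef, seidelOf, allOnes, Matrix.map_apply, Matrix.sub_apply,
      Matrix.add_apply, Matrix.smul_apply, Matrix.kroneckerMap_apply, Matrix.one_apply,
      Matrix.of_apply, smul_eq_mul, two_smul, Prod.mk.injEq]
    split_ifs
    all_goals (try (exfalso; tauto))
    all_goals push_cast
    all_goals ring
  -- unitarity of the big conjugating matrix
  have hstarV : star (U1 ⊗ₖ (U1 ⊗ₖ U2)) = star U1 ⊗ₖ (star U1 ⊗ₖ star U2) := by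
    simp [Matrix.star_eq_conjTranspose, my_conjTranspose_kronecker]
  have hV : (U1 ⊗ₖ (U1 ⊗ₖ U2)) * star (U1 ⊗ₖ (U1 ⊗ₖ U2)) = 1 := by
    rw [hstarV, ← Matrix.mul_kronecker_mul, ← Matrix.mul_kronecker_mul, h1Us, h2Us,
      Matrix.one_kronecker_one, Matrix.one_kronecker_one]
  -- spectrum of the big matrix
  have hspec1 : specC (seidelOf (allOnes (Fin m) ⊗ₖ ((allOnes (Fin m) ⊗ₖ G.adjMatrix ℝ) + 1) - 1))
      = Finset.univ.val.map (fun x : Fin m × Fin m × Fin n =>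
          e x.1 * (e x.2.1 * (d x.2.2 + 1)) - 2 * e x.1 + 1) := by
    unfold specC
    rw [hBig]
    rw [← my_charpoly_conj_s13 (U1 ⊗ₖ (U1 ⊗ₖ U2)) (star (U1 ⊗ₖ (U1 ⊗ₖ U2))) _ hV]
    rw [my_conj_step Jc U1 Sc U2 e d hU1s hU2s hD1 hD2]
    exact my_roots_charpoly_diagonal _
  have hspecS : specC (seidelOf (G.adjMatrix ℝ)) = Finset.univ.val.map d := by
    unfold specC
    exact my_roots_hermitian hSH
  have he_ms : Finset.univ.val.map e = Multiset.replicate (m-1) 0 + {(m:ℂ)} := by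
    rw [← my_roots_hermitian hJH]
    show ((allOnes (Fin m)).map Complex.ofReal).charpoly.roots = _
    rw [my_charpoly_allOnes hm, my_roots_XpowXsubC]
  obtain ⟨i₀, he, h0⟩ := my_extract e he_ms
  rw [hspec1, hspecS, my_multiset_final e d i₀ he h0]
end

section
/- If m ≥ 2 and G is a graph on n ≥ 1 vertices, then D_m(G) and D_m^*(G) are not Seidel cospectral, since -1 occurs with multiplicity at least mn - n > 0 in the Seidel spectrum of D_m(G) while every eigenvalue of D_m^*(G) of the form mσ_i - (m-1) equals -1 only when σ_i = (m-2)/m; in particular, if |σ_i| > (m-1)/m for all i, the multiplicity of the eigenvalue 1 differs between the two spectra. -/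
open Matrix Kronecker BigOperators Finset

namespace NSC

open Polynomial

set_option linter.unusedSectionVars false

theorem charpoly_conj' {R : Type*} [CommRing R] {k : Type*} [Fintype k] [DecidableEq k]
    (P Q M : Matrix k k R) (h : P * Q = 1) :
    (P * M * Q).charpoly = M.charpoly := by
  have h2 : Q * P = 1 := mul_eq_one_comm.mp h
  have hPQ : (P.map C) * (Q.map C) = 1 := by
    rw [← Matrix.map_mul, h, Matrix.map_one _ (map_zero C) (map_one C)]
  have key : charmatrix (P * M * Q) =
      (P.map C) * charmatrix M * (Q.map C) := by
    unfold charmatrix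
    rw [Matrix.mul_sub, Matrix.sub_mul]
    congr 1
    · rw [Matrix.scalar_apply, ← smul_one_eq_diagonal, Matrix.mul_smul, Matrix.smul_mul,
        Matrix.mul_one, hPQ]
    · simp only [RingHom.mapMatrix_apply, Matrix.map_mul]
  rw [Matrix.charpoly, key, det_mul, det_mul, mul_comm, ← mul_assoc, ← det_mul,
    ← Matrix.map_mul, h2, Matrix.map_one _ (map_zero C) (map_one C), det_one, one_mul,
    Matrix.charpoly]

theorem charmatrix_blockDiagonal' {R : Type*} [CommRing R] {k o : Type*} [Fintype k]
    [DecidableEq k] [Fintype o] [DecidableEq o] (f : o → Matrix k k R) :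
    charmatrix (blockDiagonal f) = blockDiagonal (fun i => charmatrix (f i)) := by
  ext ⟨i, a⟩ ⟨j, b⟩
  by_cases hab : a = b
  · subst hab
    by_cases hij : i = j
    · subst hij
      simp [charmatrix_apply_eq, blockDiagonal_apply]
    · have : ((i,a) : k × o) ≠ (j,a) := by simp [hij]
      simp [charmatrix_apply_ne _ _ _ this, charmatrix_apply_ne _ _ _ hij,
        blockDiagonal_apply]
  · have : ((i,a) : k × o) ≠ (j,b) := by simp [hab]
    simp [charmatrix_apply_ne _ _ _ this, blockDiagonal_apply, hab]

theorem charpoly_blockDiagonal' {R : Type*} [CommRing R] {k o : Type*} [Fintype k]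
    [DecidableEq k] [Fintype o] [DecidableEq o] (f : o → Matrix k k R) :
    (blockDiagonal f).charpoly = ∏ i, (f i).charpoly := by
  rw [Matrix.charpoly, charmatrix_blockDiagonal', det_blockDiagonal]
  rfl

theorem charpoly_smul_one {R : Type*} [CommRing R] {k : Type*} [Fintype k] [DecidableEq k]
    (e : R) :
    (e • (1 : Matrix k k R)).charpoly = (X - C e) ^ Fintype.card k := by
  have h1 : e • (1 : Matrix k k R) = diagonal (fun _ => e) := by
    rw [smul_one_eq_diagonal]
  rw [h1]
  have h2 : charmatrix (diagonal (fun _ : k => e)) = diagonal (fun _ => X - C e) := by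
    ext i j
    by_cases hij : i = j
    · subst hij; simp [charmatrix_apply_eq]
    · simp [charmatrix_apply_ne _ _ _ hij, diagonal_apply_ne _ hij]
  rw [Matrix.charpoly, h2, det_diagonal, Finset.prod_const, Finset.card_univ]

theorem charpoly_affine {k : Type*} [Fintype k] [DecidableEq k]
    (M : Matrix k k ℂ) (c d : ℂ) (hc : c ≠ 0) :
    (c • M + d • 1).charpoly = (M.charpoly.roots.map fun r => X - C (c * r + d)).prod := by
  set ψ : ℂ[X] →ₐ[ℂ] ℂ[X] := aeval (C c⁻¹ * (X - C d)) with hψ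
  have entry : ∀ a : ℂ, C c * (C c⁻¹ * (X - C d) - C a) = X - C (c * a + d) := by
    intro a
    rw [mul_sub, ← mul_assoc, ← C_mul, mul_inv_cancel₀ hc, C_1, one_mul, ← C_mul, map_add]
    ring
  have key : charmatrix (c • M + d • 1) = C c • (charmatrix M).map ψ := by
    ext i j
    by_cases hij : i = j
    · subst hij
      simp only [charmatrix_apply_eq, Matrix.smul_apply, Matrix.map_apply, map_sub,
        hψ, aeval_X, aeval_C, Matrix.add_apply, Matrix.one_apply_eq, smul_eq_mul,
        algebraMap_eq, mul_one]
      rw [entry (M i i)]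
    · simp only [charmatrix_apply_ne _ _ _ hij, Matrix.smul_apply, Matrix.map_apply,
        map_neg, map_sub, hψ, aeval_C, Matrix.add_apply, Matrix.one_apply_ne hij,
        smul_eq_mul, smul_zero, add_zero, algebraMap_eq, mul_zero]
      rw [mul_neg, ← C_mul]
  have hsplit : M.charpoly = (M.charpoly.roots.map fun a => X - C a).prod :=
    (IsAlgClosed.splits _).eq_prod_roots_of_monic (Matrix.charpoly_monic M)
  have hcard : Multiset.card M.charpoly.roots = Fintype.card k := by
    rw [splits_iff_card_roots.mp (IsAlgClosed.splits _),
      Matrix.charpoly_natDegree_eq_dim]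
  rw [Matrix.charpoly, key, det_smul]
  have hdet : ((charmatrix M).map ψ).det = ψ (charmatrix M).det := (AlgHom.map_det ψ _).symm
  rw [hdet, ← Matrix.charpoly]
  nth_rewrite 1 [hsplit]
  rw [map_multiset_prod, Multiset.map_map]
  simp only [Function.comp, map_sub, hψ, aeval_X, aeval_C, algebraMap_eq]
  rw [← hcard]
  rw [show (C c) ^ Multiset.card M.charpoly.roots
      = (Multiset.map (fun _ : ℂ => C c) M.charpoly.roots).prod by
    rw [Multiset.map_const', Multiset.prod_replicate], ← Multiset.prod_map_mul]
  exact congrArg Multiset.prod (Multiset.map_congr rfl (fun a _ => entry a))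

theorem roots_charpoly_affine {k : Type*} [Fintype k] [DecidableEq k]
    (M : Matrix k k ℂ) (c d : ℂ) (hc : c ≠ 0) :
    (c • M + d • 1).charpoly.roots = M.charpoly.roots.map (fun r => c * r + d) := by
  rw [charpoly_affine M c d hc,
    show (fun r : ℂ => X - C (c * r + d)) = (fun a : ℂ => X - C a) ∘ (fun r => c * r + d) from
      rfl,
    ← Multiset.map_map, roots_multiset_prod_X_sub_C]

variable {m : ℕ} [NeZero m]

noncomputable def JC (m : ℕ) : Matrix (Fin m) (Fin m) ℂ := Matrix.of fun _ _ => 1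
noncomputable def Pc (m : ℕ) [NeZero m] : Matrix (Fin m) (Fin m) ℂ :=
  Matrix.of fun _ j => if j = 0 then 1 else 0
noncomputable def Pt (m : ℕ) [NeZero m] : Matrix (Fin m) (Fin m) ℂ :=
  Matrix.of fun i _ => if i = 0 then 1 else 0
noncomputable def E00 (m : ℕ) [NeZero m] : Matrix (Fin m) (Fin m) ℂ :=
  Matrix.of fun i j => if i = 0 ∧ j = 0 then 1 else 0
noncomputable def Qm (m : ℕ) [NeZero m] : Matrix (Fin m) (Fin m) ℂ := Pc m + Pt m - 1
noncomputable def Rm (m : ℕ) [NeZero m] : Matrix (Fin m) (Fin m) ℂ :=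
  ((m : ℂ))⁻¹ • JC m - 1 + E00 m

lemma hPP : Pc m * Pc m = Pc m := by
  ext i k; simp [Pc, mul_apply, ite_mul]
lemma hPPt : Pc m * Pt m = JC m := by
  ext i k; simp [Pc, Pt, JC, mul_apply, ite_mul]
lemma hPtP : Pt m * Pc m = (m : ℂ) • E00 m := by
  ext i k
  simp [Pt, Pc, E00, mul_apply, ite_mul, mul_ite, Finset.sum_ite_eq]
  by_cases h : i = 0 <;> by_cases h' : k = 0 <;> simp [h, h', Finset.card_univ]
lemma hPtPt : Pt m * Pt m = Pt m := by
  ext i k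
  simp [Pt, mul_apply, ite_mul, Finset.sum_ite_eq]
lemma hJP : JC m * Pc m = (m : ℂ) • Pc m := by
  ext i k
  simp [JC, Pc, mul_apply, mul_ite, Finset.card_univ]
lemma hPJ : Pc m * JC m = JC m := by
  ext i k; simp [JC, Pc, mul_apply, ite_mul]
lemma hJPt : JC m * Pt m = JC m := by
  ext i k; simp [JC, Pt, mul_apply, mul_ite, Finset.sum_ite_eq]
lemma hPtJ : Pt m * JC m = (m : ℂ) • Pt m := by
  ext i k
  simp [JC, Pt, mul_apply, ite_mul, Finset.card_univ]
lemma hJJ : JC m * JC m = (m : ℂ) • JC m := by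
  ext i k; simp [JC, mul_apply, Finset.card_univ]
lemma hPE : Pc m * E00 m = Pc m := by
  ext i k
  by_cases h : i = 0 <;> by_cases h' : k = 0 <;>
    simp [Pc, Pt, E00, mul_apply, ite_mul, mul_ite, ite_and, Finset.sum_ite_eq, h, h']
lemma hEP : E00 m * Pc m = E00 m := by
  ext i k
  by_cases h : i = 0 <;> by_cases h' : k = 0 <;>
    simp [Pc, Pt, E00, mul_apply, ite_mul, mul_ite, ite_and, Finset.sum_ite_eq, h, h']
lemma hEPt : E00 m * Pt m = Pt m := by
  ext i k
  by_cases h : i = 0 <;> by_cases h' : k = 0 <;>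
    simp [Pc, Pt, E00, mul_apply, ite_mul, mul_ite, ite_and, Finset.sum_ite_eq, h, h']
lemma hPtE : Pt m * E00 m = E00 m := by
  ext i k
  by_cases h : i = 0 <;> by_cases h' : k = 0 <;>
    simp [Pc, Pt, E00, mul_apply, ite_mul, mul_ite, ite_and, Finset.sum_ite_eq, h, h']
lemma hJE : JC m * E00 m = Pc m := by
  ext i k; simp [JC, Pc, E00, mul_apply, mul_ite, ite_and, Finset.sum_ite_eq]
lemma hEJ : E00 m * JC m = Pt m := by
  ext i k; simp [JC, Pt, E00, mul_apply, ite_mul, ite_and]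
lemma hEE : E00 m * E00 m = E00 m := by
  ext i k
  by_cases h : i = 0 <;> by_cases h' : k = 0 <;>
    simp [Pc, Pt, E00, mul_apply, ite_mul, mul_ite, ite_and, Finset.sum_ite_eq, h, h']

lemma hQR (hm : (m : ℂ) ≠ 0) : Qm m * Rm m = 1 := by
  unfold Qm Rm
  simp only [Matrix.add_mul, Matrix.sub_mul, Matrix.mul_add, Matrix.mul_sub,
    Matrix.mul_smul, Matrix.smul_mul, Matrix.one_mul, Matrix.mul_one,
    hPP, hPPt, hPtP, hPtPt, hJP, hPJ, hJPt, hPtJ, hJJ, hPE, hEP, hEPt, hPtE, hJE, hEJ, hEE]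
  rw [smul_sub, smul_add, smul_smul, inv_mul_cancel₀ hm, one_smul]
  abel

lemma hJQDR (hm : (m : ℂ) ≠ 0) : Qm m * ((m : ℂ) • E00 m) * Rm m = JC m := by
  unfold Qm Rm
  simp only [Matrix.add_mul, Matrix.sub_mul, Matrix.mul_add, Matrix.mul_sub,
    Matrix.mul_smul, Matrix.smul_mul, Matrix.one_mul, Matrix.mul_one,
    hPP, hPPt, hPtP, hPtPt, hJP, hPJ, hJPt, hPtJ, hJJ, hPE, hEP, hEPt, hPtE, hJE, hEJ, hEE]
  rw [smul_smul, inv_mul_cancel₀ hm, one_smul]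
  abel

theorem roots_kron {m n : ℕ} (hm : 2 ≤ m) (B : Matrix (Fin n) (Fin n) ℂ) (e : ℂ) :
    (JC m ⊗ₖ B + e • 1).charpoly.roots
      = ((m : ℂ) • B + e • 1).charpoly.roots + Multiset.replicate ((m - 1) * n) e := by
  haveI : NeZero m := ⟨by omega⟩
  have hmc : (m : ℂ) ≠ 0 := Nat.cast_ne_zero.mpr (by omega)
  have hQR1 : (Qm m ⊗ₖ (1 : Matrix (Fin n) (Fin n) ℂ)) * (Rm m ⊗ₖ 1) = 1 := by
    rw [← Matrix.mul_kronecker_mul, hQR hmc, Matrix.one_mul, Matrix.one_kronecker_one]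
  have step1 : JC m ⊗ₖ B + e • 1
      = (Qm m ⊗ₖ 1) * (((m : ℂ) • E00 m) ⊗ₖ B + e • 1) * (Rm m ⊗ₖ 1) := by
    rw [Matrix.mul_add, Matrix.add_mul]
    congr 1
    · rw [← Matrix.mul_kronecker_mul, ← Matrix.mul_kronecker_mul, Matrix.one_mul,
        Matrix.mul_one, hJQDR hmc]
    · rw [Matrix.mul_smul, Matrix.mul_one, Matrix.smul_mul, hQR1]
  have step3 : ((m : ℂ) • E00 m) ⊗ₖ B + e • (1 : Matrix (Fin m × Fin n) (Fin m × Fin n) ℂ)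
      = (reindex (Equiv.prodComm (Fin n) (Fin m)) (Equiv.prodComm (Fin n) (Fin m)))
          (blockDiagonal fun i : Fin m => (if i = 0 then (m : ℂ) else 0) • B + e • 1) := by
    ext ⟨i, a⟩ ⟨j, b⟩
    simp only [Matrix.add_apply, Matrix.smul_apply, kroneckerMap_apply, E00, Matrix.of_apply,
      reindex_apply, submatrix_apply, Equiv.prodComm_symm, Equiv.prodComm_apply, Prod.swap,
      blockDiagonal_apply, Matrix.one_apply, Prod.mk.injEq, smul_eq_mul]
    by_cases hij : i = j
    · subst hij
      by_cases hi : i = 0 <;> by_cases hab : a = b <;> simp [hi, hab]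
    · simp only [hij, if_false, and_false, false_and, ite_false]
      simp [hij]
      intro h1 h2
      exact absurd (h1.trans h2.symm) hij
  have key : (JC m ⊗ₖ B + e • 1).charpoly
      = ((m : ℂ) • B + e • 1).charpoly * ((X - C e) ^ n) ^ (m - 1) := by
    rw [step1, charpoly_conj' _ _ _ hQR1, step3, Matrix.charpoly_reindex,
      charpoly_blockDiagonal']
    have h0 : ∀ i : Fin m, ((if i = 0 then (m : ℂ) else 0) • B + e • 1).charpoly
        = if i = 0 then ((m : ℂ) • B + e • 1).charpoly else (X - C e) ^ n := by
      intro i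
      split_ifs with h
      · rfl
      · rw [zero_smul, zero_add, charpoly_smul_one, Fintype.card_fin]
    simp only [h0]
    rw [← Finset.prod_filter_mul_prod_filter_not Finset.univ (· = 0)]
    congr 1
    · rw [Finset.filter_eq' Finset.univ (0 : Fin m), if_pos (Finset.mem_univ 0),
        Finset.prod_singleton, if_pos rfl]
    · rw [Finset.prod_congr rfl
        (fun i hi => if_neg (by simpa using (Finset.mem_filter.mp hi).2)),
        Finset.prod_const]
      congr 1
      rw [Finset.filter_not, Finset.filter_eq' Finset.univ (0 : Fin m),
        if_pos (Finset.mem_univ 0), Finset.card_sdiff_of_subset (by simp), Finset.card_univ,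
        Fintype.card_fin, Finset.card_singleton]
  rw [key, Polynomial.roots_mul (mul_ne_zero (Matrix.charpoly_monic _).ne_zero
    (pow_ne_zero _ (pow_ne_zero _ (Polynomial.X_sub_C_ne_zero e)))),
    Polynomial.roots_pow, Polynomial.roots_pow, Polynomial.roots_X_sub_C,
    Multiset.nsmul_singleton, Multiset.nsmul_replicate]

lemma map_seidel_kron {m n : ℕ} [NeZero m] (A : Matrix (Fin n) (Fin n) ℝ) :
    (seidelOf (allOnes (Fin m) ⊗ₖ A)).map Complex.ofReal
      = JC m ⊗ₖ (((seidelOf A).map Complex.ofReal) + 1) + (-1 : ℂ) • 1 := by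
  ext ⟨i, a⟩ ⟨j, b⟩
  simp only [seidelOf, allOnes, Matrix.map_apply, Matrix.sub_apply, Matrix.add_apply,
    Matrix.smul_apply, Matrix.of_apply, kroneckerMap_apply, Matrix.one_apply, JC,
    smul_eq_mul, Prod.mk.injEq]
  simp only [nsmul_eq_mul, Nat.cast_ofNat]
  by_cases hij : i = j <;> by_cases hab : a = b <;>
    · push_cast
      simp [hij, hab]
      try ring

lemma map_seidel_kron' {m n : ℕ} [NeZero m] (A : Matrix (Fin n) (Fin n) ℝ) :
    (seidelOf (allOnes (Fin m) ⊗ₖ (A + 1) - 1)).map Complex.ofReal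
      = JC m ⊗ₖ (((seidelOf A).map Complex.ofReal) - 1) + (1 : ℂ) • 1 := by
  ext ⟨i, a⟩ ⟨j, b⟩
  simp only [seidelOf, allOnes, Matrix.map_apply, Matrix.sub_apply, Matrix.add_apply,
    Matrix.smul_apply, Matrix.of_apply, kroneckerMap_apply, Matrix.one_apply, JC,
    smul_eq_mul, Prod.mk.injEq]
  simp only [nsmul_eq_mul, Nat.cast_ofNat]
  by_cases hij : i = j <;> by_cases hab : a = b <;>
    · push_cast
      simp [hij, hab]
      try ring

end NSC

theorem not_seidel_cospectral {m n : ℕ} (hm : 2 ≤ m) (hn : 1 ≤ n)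
    (G : SimpleGraph (Fin n)) [DecidableRel G.Adj] (σ : Fin n → ℝ)
    (hspec : specC (seidelOf (G.adjMatrix ℝ)) =
      (Finset.univ.val.map fun i => ((σ i : ℝ) : ℂ)))
    (habs : ∀ i, |σ i| > ((m : ℝ) - 1) / m) :
    m * n - n ≤ (specC (seidelOf (allOnes (Fin m) ⊗ₖ G.adjMatrix ℝ))).count (-1 : ℂ) ∧
    specC (seidelOf (allOnes (Fin m) ⊗ₖ G.adjMatrix ℝ)) ≠
      specC (seidelOf (allOnes (Fin m) ⊗ₖ (G.adjMatrix ℝ + 1) - 1)) ∧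
    (specC (seidelOf (allOnes (Fin m) ⊗ₖ G.adjMatrix ℝ))).count (1 : ℂ) ≠
      (specC (seidelOf (allOnes (Fin m) ⊗ₖ (G.adjMatrix ℝ + 1) - 1))).count (1 : ℂ) := by
  classical
  haveI : NeZero m := ⟨by omega⟩
  have hmc : (m : ℂ) ≠ 0 := Nat.cast_ne_zero.mpr (by omega)
  set A := G.adjMatrix ℝ with hA
  set Sc := (seidelOf A).map Complex.ofReal with hSc
  have hroots : Sc.charpoly.roots = Finset.univ.val.map (fun i => ((σ i : ℝ) : ℂ)) := hspec
  have hsub : m * n - n = (m - 1) * n := by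
    rw [Nat.sub_mul, one_mul]
  have e1 : specC (seidelOf (allOnes (Fin m) ⊗ₖ A))
      = (Finset.univ.val.map fun i => ((σ i : ℝ) : ℂ)).map
          (fun r => (m : ℂ) * r + ((m : ℂ) - 1))
        + Multiset.replicate ((m - 1) * n) (-1 : ℂ) := by
    show ((seidelOf (allOnes (Fin m) ⊗ₖ A)).map Complex.ofReal).charpoly.roots = _
    rw [NSC.map_seidel_kron A, NSC.roots_kron hm (Sc + 1) (-1)]
    congr 1
    rw [show (m : ℂ) • (Sc + 1) + (-1 : ℂ) • 1 = (m : ℂ) • Sc + ((m : ℂ) - 1) • 1 by module,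
      NSC.roots_charpoly_affine Sc (m : ℂ) ((m : ℂ) - 1) hmc, hroots]
  have e2 : specC (seidelOf (allOnes (Fin m) ⊗ₖ (A + 1) - 1))
      = (Finset.univ.val.map fun i => ((σ i : ℝ) : ℂ)).map
          (fun r => (m : ℂ) * r + (1 - (m : ℂ)))
        + Multiset.replicate ((m - 1) * n) (1 : ℂ) := by
    show ((seidelOf (allOnes (Fin m) ⊗ₖ (A + 1) - 1)).map Complex.ofReal).charpoly.roots = _
    rw [NSC.map_seidel_kron' A, NSC.roots_kron hm (Sc - 1) 1]
    congr 1
    rw [show (m : ℂ) • (Sc - 1) + (1 : ℂ) • 1 = (m : ℂ) • Sc + (1 - (m : ℂ)) • 1 by module,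
      NSC.roots_charpoly_affine Sc (m : ℂ) (1 - (m : ℂ)) hmc, hroots]
  have hcount1 : (specC (seidelOf (allOnes (Fin m) ⊗ₖ A))).count (1 : ℂ) = 0 := by
    rw [e1, Multiset.count_add, Multiset.count_replicate, if_neg (by norm_num), add_zero]
    rw [Multiset.count_eq_zero]
    intro hmem
    obtain ⟨r, hr, heq⟩ := Multiset.mem_map.mp hmem
    obtain ⟨i, _, rfl⟩ := Multiset.mem_map.mp hr
    have heqr : (m : ℝ) * σ i + ((m : ℝ) - 1) = 1 := by exact_mod_cast heq
    have hm2 : (2 : ℝ) ≤ m := by exact_mod_cast hm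
    have hmpos : (0 : ℝ) < m := by linarith
    have habs' := habs i
    rw [gt_iff_lt, div_lt_iff₀ hmpos] at habs'
    rcases abs_cases (σ i) with ⟨hc, _⟩ | ⟨hc, _⟩ <;> rw [hc] at habs' <;> nlinarith
  have hcount2 : 0 < (specC (seidelOf (allOnes (Fin m) ⊗ₖ (A + 1) - 1))).count (1 : ℂ) := by
    rw [e2, Multiset.count_add, Multiset.count_replicate, if_pos rfl]
    have hk : 0 < (m - 1) * n := Nat.mul_pos (by omega) hn
    omega
  have hmain : (specC (seidelOf (allOnes (Fin m) ⊗ₖ A))).count (1 : ℂ) ≠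
      (specC (seidelOf (allOnes (Fin m) ⊗ₖ (A + 1) - 1))).count (1 : ℂ) := by
    rw [hcount1]
    omega
  refine ⟨?_, fun h => hmain (by rw [h]), hmain⟩
  rw [e1, Multiset.count_add, Multiset.count_replicate, if_pos rfl, hsub]
  exact Nat.le_add_left _ _
end
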